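/- Let R be a reduced root system with base Π, and let S ⊆ Π. If K, K' ∈ 𝒦(S), then either K ⊆ K', or K' ⊆ K, or K and K' are disjoint subsets of S such that α + β ∉ R for every α ∈ R^K and β ∈ R^{K'}. -/

import Mathlib

open Finset Module

open scoped Classical

/-- A reduced crystallographic root system in the `k`-vector space `V`, recorded through
the finite set `roots` of roots, the coroot linear forms `corootForm α = ⟨·, α^∨⟩`, and
the integer Cartan pairing `pairInt β α = ⟨β, α^∨⟩ ∈ ℤ` (meaningful when `α, β` are roots). -/
structure RootSystemData (k V : Type*) [Field k] [CharZero k]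
    [AddCommGroup V] [Module k V] where
  /-- the (finite) set of roots -/
  roots : Finset V
  /-- `corootForm α` is the linear form `⟨·, α^∨⟩` associated to the coroot of a root `α` -/
  corootForm : V → V →ₗ[k] k
  /-- the integer `⟨β, α^∨⟩`, recorded as `pairInt β α` -/
  pairInt : V → V → ℤ
  ne_zero : ∀ α ∈ roots, α ≠ (0 : V)
  span_eq_top : Submodule.span k (roots : Set V) = ⊤
  pair_compat : ∀ α ∈ roots, ∀ β ∈ roots, ((pairInt β α : ℤ) : k) = corootForm α β
  pair_self : ∀ α ∈ roots, pairInt α α = 2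
  reflect_mem : ∀ α ∈ roots, ∀ β ∈ roots, β - pairInt β α • α ∈ roots
  reduced : ∀ α ∈ roots, ∀ c : k, c • α ∈ roots → c = 1 ∨ c = -1

namespace RootSystemData

variable {k V : Type*} [Field k] [CharZero k] [AddCommGroup V] [Module k V]
variable (P : RootSystemData k V)

/-- A base (set of simple roots) of the root system: a linearly independent set of roots
such that every root is a nonnegative or nonpositive integral combination of its elements. -/
structure IsBase (B : Finset V) : Prop where
  subset : B ⊆ P.roots
  indep : LinearIndependent k (fun b : B => (b : V))
  pos_or_neg : ∀ α ∈ P.roots,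
    α ∈ AddSubmonoid.closure (B : Set V) ∨ -α ∈ AddSubmonoid.closure (B : Set V)

/-- The positive roots `R₊` with respect to a base `B`. -/
noncomputable def posRoots (B : Finset V) : Finset V :=
  P.roots.filter fun α => α ∈ AddSubmonoid.closure (B : Set V)

/-- `R^S = R ∩ ℤS`. -/
noncomputable def rootsOf (S : Finset V) : Finset V :=
  P.roots.filter fun α => α ∈ AddSubgroup.closure (S : Set V)

/-- `R₊^S = R ∩ ℕS`. -/
noncomputable def posRootsOf (S : Finset V) : Finset V :=
  P.roots.filter fun α => α ∈ AddSubmonoid.closure (S : Set V)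

/-- Two simple roots are linked in the Dynkin diagram of `S ⊆ Δ` when they can be joined
by a chain in `S` of consecutively non-orthogonal elements. -/
def Linked (S : Finset V) : V → V → Prop :=
  Relation.ReflTransGen fun a b => a ∈ S ∧ b ∈ S ∧ P.pairInt a b ≠ 0

/-- A subset of a base is connected if its Dynkin diagram is connected (and nonempty). -/
def IsConnected (S : Finset V) : Prop :=
  S.Nonempty ∧ ∀ a ∈ S, ∀ b ∈ S, P.Linked S a b

/-- `ε` is the highest root of `R^S`: a positive root of `R^S` such that `ε - α ∈ ℕS`
for every root `α ∈ R^S`. -/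
def IsHighestRoot (S : Finset V) (ε : V) : Prop :=
  ε ∈ P.posRootsOf S ∧ ∀ α ∈ P.rootsOf S, ε - α ∈ AddSubmonoid.closure (S : Set V)

/-- The highest root `ε_S` of `R^S` (junk value `0` if it does not exist). -/
noncomputable def highestRoot (S : Finset V) : V :=
  if h : ∃ ε, P.IsHighestRoot S ε then h.choose else 0

/-- The connected component of `a` in the Dynkin diagram of `S`. -/
noncomputable def component (S : Finset V) (a : V) : Finset V :=
  S.filter fun b => P.Linked S a b

/-- The connected components of the Dynkin diagram of `S`. -/
noncomputable def components (S : Finset V) : Finset (Finset V) :=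
  S.image fun a => P.component S a

/-- `{α ∈ S : ⟨α, ε_S^∨⟩ = 0}`. -/
noncomputable def zeroPart (S : Finset V) : Finset V :=
  S.filter fun a => P.pairInt a (P.highestRoot S) = 0

/-- Fuel-based auxiliary recursion for the cascade `𝒦(S)`; for an actual root system the
recursion terminates in at most `card S` steps, so fuel `card S + 1` computes `𝒦(S)`. -/
noncomputable def cascadeAux : ℕ → Finset V → Finset (Finset V)
  | 0, _ => ∅
  | n + 1, S => (P.components S).biUnion fun C => insert C (cascadeAux n (P.zeroPart C))

/-- The cascade `𝒦(S)`, defined recursively by `𝒦(∅) = ∅`,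
`𝒦(S) = 𝒦(S₁) ∪ ⋯ ∪ 𝒦(S_r)` if `S` has connected components `S₁, …, S_r`, and
`𝒦(S) = {S} ∪ 𝒦({α ∈ S : ⟨α, ε_S^∨⟩ = 0})` if `S` is connected. -/
noncomputable def cascade (S : Finset V) : Finset (Finset V) :=
  P.cascadeAux (S.card + 1) S

/-- `Γ^K = {α ∈ R^K : ⟨α, ε_K^∨⟩ > 0}`. -/
noncomputable def gamma (K : Finset V) : Finset V :=
  (P.rootsOf K).filter fun α => 0 < P.pairInt α (P.highestRoot K)

end RootSystemData

set_option linter.unusedSectionVars false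

namespace CascadeProofAux

open RootSystemData

variable {k V : Type*} [Field k] [CharZero k] [AddCommGroup V] [Module k V]
variable {P : RootSystemData k V} {Δ : Finset V}

lemma cast_both_zero {n m : ℕ} (h : (n : k) + (m : k) = 0) : n = 0 ∧ m = 0 := by
  have : ((n + m : ℕ) : k) = ((0 : ℕ) : k) := by push_cast; exact h
  have := Nat.cast_injective (R := k) this
  omega

lemma cast_contra {x : k} {n m : ℕ} (hx : x = n) (hx' : -x = m) (hne : x ≠ 0) : False := by
  have h : (n : k) + (m : k) = 0 := by rw [← hx, ← hx']; ring
  have := cast_both_zero h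
  exact hne (by rw [hx, this.1]; simp)

/-- coordinates of a nonnegative combination are casts of naturals -/
lemma repr_natcast (b : Basis Δ k V) (hb : ∀ i : Δ, b i = i)
    {v : V} (hv : v ∈ AddSubmonoid.closure (Δ : Set V)) (i : Δ) :
    ∃ n : ℕ, b.repr v i = n := by
  induction hv using AddSubmonoid.closure_induction with
  | mem x hx =>
      have hx' : x ∈ Δ := by exact_mod_cast hx
      have : x = b ⟨x, hx'⟩ := (hb ⟨x, hx'⟩).symm
      rw [this, b.repr_self]
      rcases eq_or_ne (⟨x, hx'⟩ : Δ) i with h | h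
      · exact ⟨1, by rw [h, Finsupp.single_eq_same]; norm_num⟩
      · exact ⟨0, by rw [Finsupp.single_eq_of_ne' h]; norm_num⟩
  | zero => exact ⟨0, by simp⟩
  | add x y hx hy ihx ihy =>
      obtain ⟨n, hn⟩ := ihx
      obtain ⟨m, hm⟩ := ihy
      exact ⟨n + m, by rw [map_add, Finsupp.add_apply, hn, hm]; push_cast; ring⟩

/-- coordinates outside the support vanish -/
lemma repr_zero_of_not_mem (b : Basis Δ k V) (hb : ∀ i : Δ, b i = i)
    {C : Finset V} (hC : C ⊆ Δ) {v : V} (hv : v ∈ AddSubgroup.closure (C : Set V))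
    (i : Δ) (hi : (i : V) ∉ C) : b.repr v i = 0 := by
  have hsp : v ∈ Submodule.span k (C : Set V) := by
    have : AddSubgroup.closure (C : Set V) ≤ (Submodule.span k (C : Set V)).toAddSubgroup :=
      (AddSubgroup.closure_le _).mpr Submodule.subset_span
    exact this hv
  clear hv
  induction hsp using Submodule.span_induction with
  | mem x hx =>
      have hxΔ : x ∈ Δ := hC hx
      have : x = b ⟨x, hxΔ⟩ := (hb ⟨x, hxΔ⟩).symm
      rw [this, b.repr_self]
      refine Finsupp.single_eq_of_ne' ?_
      intro h
      exact hi (by rw [← h]; exact hx)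
  | zero => simp
  | add x y hx hy ihx ihy => rw [map_add, Finsupp.add_apply, ihx, ihy]; ring
  | smul c x hx ih => rw [map_smul, Finsupp.smul_apply, ih, smul_zero]

lemma exists_repr_ne (b : Basis Δ k V) (hb : ∀ i : Δ, b i = i)
    {C : Finset V} (hC : C ⊆ Δ) {v : V} (h0 : v ≠ 0)
    (hv : v ∈ AddSubgroup.closure (C : Set V)) :
    ∃ i : Δ, (i : V) ∈ C ∧ b.repr v i ≠ 0 := by
  by_contra h
  push_neg at h
  apply h0
  have : b.repr v = 0 := by
    ext i
    by_cases hi : (i : V) ∈ C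
    · exact h i hi
    · exact repr_zero_of_not_mem b hb hC hv i hi
  have := congrArg b.repr.symm this
  simpa using this

end CascadeProofAux

namespace CascadeProofAux

variable {k V : Type*} [Field k] [CharZero k] [AddCommGroup V] [Module k V]
variable {P : RootSystemData k V} {Δ : Finset V}

lemma natcast_eq_neg_natcast {n m : ℕ} (h : (n : k) = -(m : k)) : n = 0 ∧ m = 0 :=
  cast_both_zero (by rw [h]; ring)

/-- If `⟨α, c^∨⟩ = 0` then `⟨c, α^∨⟩ = 0`, for `c` a simple root not in `C` and
`α` a root in `ℤC`. -/
lemma pairInt_symm_zero (hbase : P.IsBase Δ) (b : Basis Δ k V) (hb : ∀ i : Δ, b i = i)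
    {C : Finset V} (hC : C ⊆ Δ) {c α : V}
    (hcΔ : c ∈ Δ) (hcC : c ∉ C) (hα : α ∈ P.roots)
    (hαC : α ∈ AddSubgroup.closure (C : Set V))
    (h : P.pairInt α c = 0) : P.pairInt c α = 0 := by
  by_contra hp
  have hcR : c ∈ P.roots := hbase.subset hcΔ
  set p := P.pairInt c α with hpdef
  set q := p • α with hqdef
  have hδR : c - q ∈ P.roots := P.reflect_mem α hα c hcR
  have h2 : P.pairInt (c - q) c = 2 := by
    have hcpt := P.pair_compat c hcR (c - q) hδR
    have e1 : P.corootForm c (c - q) = 2 := by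
      rw [map_sub, hqdef, map_zsmul]
      have ec : P.corootForm c c = 2 := by
        rw [← P.pair_compat c hcR c hcR, P.pair_self c hcR]; norm_num
      have eα : P.corootForm c α = 0 := by
        rw [← P.pair_compat c hcR α hα, h]; norm_num
      rw [ec, eα]; simp
    have : ((P.pairInt (c - q) c : ℤ) : k) = ((2 : ℤ) : k) := by
      rw [hcpt, e1]; norm_num
    exact_mod_cast this
  have hηR : -(c + q) ∈ P.roots := by
    have h' := P.reflect_mem c hcR (c - q) hδR
    rw [h2] at h'
    convert h' using 1
    rw [two_zsmul]; abel
  have hqC : q ∈ AddSubgroup.closure (C : Set V) := by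
    rw [hqdef]; exact AddSubgroup.zsmul_mem _ hαC p
  set ci : Δ := ⟨c, hcΔ⟩ with hcidef
  have hq0 : b.repr q ci = 0 := repr_zero_of_not_mem b hb hC hqC ci hcC
  have hbc : b.repr c = Finsupp.single ci 1 := by
    have h' := b.repr_self ci
    rwa [hb ci] at h'
  have hδpos : c - q ∈ AddSubmonoid.closure (Δ : Set V) := by
    rcases hbase.pos_or_neg _ hδR with hpos | hneg
    · exact hpos
    · exfalso
      obtain ⟨n, hn⟩ := repr_natcast b hb hneg ci
      rw [map_neg, map_sub, hbc] at hn
      rw [Finsupp.neg_apply, Finsupp.sub_apply, Finsupp.single_eq_same, hq0] at hn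
      have : (n : k) = -((1 : ℕ) : k) := by rw [← hn]; norm_num
      exact absurd (natcast_eq_neg_natcast this).2 one_ne_zero
  have hηpos : c + q ∈ AddSubmonoid.closure (Δ : Set V) := by
    rcases hbase.pos_or_neg _ hηR with hpos | hneg
    · exfalso
      obtain ⟨n, hn⟩ := repr_natcast b hb hpos ci
      rw [map_neg, map_add, hbc] at hn
      rw [Finsupp.neg_apply, Finsupp.add_apply, Finsupp.single_eq_same, hq0] at hn
      have : (n : k) = -((1 : ℕ) : k) := by rw [← hn]; norm_num
      exact absurd (natcast_eq_neg_natcast this).2 one_ne_zero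
    · rwa [neg_neg] at hneg
  have hq_eq : q = 0 := by
    have hrepr : b.repr q = 0 := by
      ext i
      simp only [Finsupp.coe_zero, Pi.zero_apply]
      rcases eq_or_ne i ci with hic | hic
      · rw [hic]; exact hq0
      · obtain ⟨n, hn⟩ := repr_natcast b hb hδpos i
        obtain ⟨m, hm⟩ := repr_natcast b hb hηpos i
        rw [map_sub, hbc] at hn
        rw [Finsupp.sub_apply, Finsupp.single_eq_of_ne' (Ne.symm hic)] at hn
        rw [map_add, hbc] at hm
        rw [Finsupp.add_apply, Finsupp.single_eq_of_ne' (Ne.symm hic)] at hm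
        have hnm : (m : k) = -(n : k) := by rw [← hn, ← hm]; ring
        have h0 := natcast_eq_neg_natcast hnm
        have : (m : k) = 0 := by rw [h0.1]; norm_num
        rw [← hm, zero_add] at this
        exact this
    have : b.repr q = b.repr 0 := by rw [hrepr, map_zero]
    exact b.repr.injective this
  have hα0 : α = 0 := by
    have hpk : ((p : ℤ) : k) ≠ 0 := Int.cast_ne_zero.mpr hp
    have hsm : ((p : ℤ) : k) • α = 0 := by
      rw [Int.cast_smul_eq_zsmul]; exact hq_eq
    exact ((smul_eq_zero.mp hsm).resolve_left hpk)
  exact P.ne_zero α hα hα0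

end CascadeProofAux

namespace CascadeProofAux

variable {k V : Type*} [Field k] [CharZero k] [AddCommGroup V] [Module k V]
variable {P : RootSystemData k V} {Δ : Finset V}

lemma corootForm_zero_of_closure {c : V} {C : Finset V}
    (h : ∀ a ∈ C, P.corootForm c a = 0) {α : V}
    (hα : α ∈ AddSubgroup.closure (C : Set V)) : P.corootForm c α = 0 := by
  induction hα using AddSubgroup.closure_induction with
  | mem x hx => exact h x (by exact_mod_cast hx)
  | zero => simp
  | add x y _ _ ihx ihy => rw [map_add, ihx, ihy, add_zero]
  | neg x _ ih => rw [map_neg, ih, neg_zero]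

lemma pairInt_zero_of_orth (hbase : P.IsBase Δ) (b : Basis Δ k V) (hb : ∀ i : Δ, b i = i)
    {C C' : Finset V} (hC : C ⊆ Δ) (hC' : C' ⊆ Δ) (hd : Disjoint C C')
    (horth : ∀ a ∈ C, ∀ c ∈ C', P.pairInt a c = 0)
    {α β : V} (hαR : α ∈ P.roots) (hαC : α ∈ AddSubgroup.closure (C : Set V))
    (hβR : β ∈ P.roots) (hβC : β ∈ AddSubgroup.closure (C' : Set V)) :
    P.pairInt β α = 0 := by
  have step1 : ∀ c ∈ C', P.pairInt α c = 0 := by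
    intro c hc
    have hcR : c ∈ P.roots := hbase.subset (hC' hc)
    have hcf : P.corootForm c α = 0 := by
      refine corootForm_zero_of_closure (fun a ha => ?_) hαC
      rw [← P.pair_compat c hcR a (hbase.subset (hC ha)), horth a ha c hc]
      norm_num
    have hcpt := P.pair_compat c hcR α hαR
    have : ((P.pairInt α c : ℤ) : k) = ((0 : ℤ) : k) := by rw [hcpt, hcf]; norm_num
    exact_mod_cast this
  have step2 : ∀ c ∈ C', P.pairInt c α = 0 := fun c hc =>
    pairInt_symm_zero hbase b hb hC (hC' hc) (Finset.disjoint_right.mp hd hc) hαR hαC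
      (step1 c hc)
  have hcf : P.corootForm α β = 0 := by
    refine corootForm_zero_of_closure (fun c hc => ?_) hβC
    rw [← P.pair_compat α hαR c (hbase.subset (hC' hc)), step2 c hc]
    norm_num
  have hcpt := P.pair_compat α hαR β hβR
  have : ((P.pairInt β α : ℤ) : k) = ((0 : ℤ) : k) := by rw [hcpt, hcf]; norm_num
  exact_mod_cast this

lemma sum_not_root (hbase : P.IsBase Δ) (b : Basis Δ k V) (hb : ∀ i : Δ, b i = i)
    {C C' : Finset V} (hC : C ⊆ Δ) (hC' : C' ⊆ Δ) (hd : Disjoint C C')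
    (horth : ∀ a ∈ C, ∀ c ∈ C', P.pairInt a c = 0)
    {α β : V} (hα : α ∈ P.rootsOf C) (hβ : β ∈ P.rootsOf C') :
    α + β ∉ P.roots := by
  intro hγR
  rw [RootSystemData.rootsOf, Finset.mem_filter] at hα hβ
  obtain ⟨hαR, hαC⟩ := hα
  obtain ⟨hβR, hβC⟩ := hβ
  have h0 : P.pairInt β α = 0 :=
    pairInt_zero_of_orth hbase b hb hC hC' hd horth hαR hαC hβR hβC
  have h2 : P.pairInt (α + β) α = 2 := by
    have hcpt := P.pair_compat α hαR (α + β) hγR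
    have hcf : P.corootForm α (α + β) = 2 := by
      rw [map_add]
      have e1 : P.corootForm α α = 2 := by
        rw [← P.pair_compat α hαR α hαR, P.pair_self α hαR]; norm_num
      have e2 : P.corootForm α β = 0 := by
        rw [← P.pair_compat α hαR β hβR, h0]; norm_num
      rw [e1, e2, add_zero]
    have : ((P.pairInt (α + β) α : ℤ) : k) = ((2 : ℤ) : k) := by rw [hcpt, hcf]; norm_num
    exact_mod_cast this
  have hδR : β - α ∈ P.roots := by
    have h' := P.reflect_mem α hαR (α + β) hγR
    rw [h2] at h'
    convert h' using 1
    rw [two_zsmul]; abel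
  obtain ⟨i, hiC, hi⟩ := exists_repr_ne b hb hC (P.ne_zero α hαR) hαC
  obtain ⟨j, hjC', hj⟩ := exists_repr_ne b hb hC' (P.ne_zero β hβR) hβC
  have hiC' : (i : V) ∉ C' := Finset.disjoint_left.mp hd hiC
  have hjC : (j : V) ∉ C := Finset.disjoint_right.mp hd hjC'
  have hβi : b.repr β i = 0 := repr_zero_of_not_mem b hb hC' hβC i hiC'
  have hαj : b.repr α j = 0 := repr_zero_of_not_mem b hb hC hαC j hjC
  have hγi : b.repr (α + β) i = b.repr α i := by
    rw [map_add, Finsupp.add_apply, hβi, add_zero]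
  have hγj : b.repr (α + β) j = b.repr β j := by
    rw [map_add, Finsupp.add_apply, hαj, zero_add]
  have hδi : b.repr (β - α) i = -(b.repr α i) := by
    rw [map_sub, Finsupp.sub_apply, hβi, zero_sub]
  have hδj : b.repr (β - α) j = b.repr β j := by
    rw [map_sub, Finsupp.sub_apply, hαj, sub_zero]
  have key : ∀ x : k, x ≠ 0 → (∃ n : ℕ, x = n) → (∃ m : ℕ, -x = m) → False := by
    rintro x hx ⟨n, hn⟩ ⟨m, hm⟩
    have hnm : (m : k) = -(n : k) := by rw [← hn, ← hm]
    obtain ⟨h1, h2⟩ := natcast_eq_neg_natcast hnm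
    exact hx (by rw [hn, h2]; norm_num)
  rcases hbase.pos_or_neg _ hγR with hγpos | hγneg <;>
    rcases hbase.pos_or_neg _ hδR with hδpos | hδneg
  · refine key (b.repr α i) hi ?_ ?_
    · obtain ⟨n, hn⟩ := repr_natcast b hb hγpos i
      exact ⟨n, by rw [← hγi]; exact hn⟩
    · obtain ⟨m, hm⟩ := repr_natcast b hb hδpos i
      exact ⟨m, by rw [← hδi]; exact hm⟩
  · refine key (b.repr β j) hj ?_ ?_
    · obtain ⟨n, hn⟩ := repr_natcast b hb hγpos j
      exact ⟨n, by rw [← hγj]; exact hn⟩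
    · obtain ⟨m, hm⟩ := repr_natcast b hb hδneg j
      rw [map_neg, Finsupp.neg_apply, hδj] at hm
      exact ⟨m, hm⟩
  · refine key (b.repr β j) hj ?_ ?_
    · obtain ⟨m, hm⟩ := repr_natcast b hb hδpos j
      exact ⟨m, by rw [← hδj]; exact hm⟩
    · obtain ⟨n, hn⟩ := repr_natcast b hb hγneg j
      rw [map_neg, Finsupp.neg_apply, hγj] at hn
      exact ⟨n, hn⟩
  · refine key (b.repr α i) hi ?_ ?_
    · obtain ⟨m, hm⟩ := repr_natcast b hb hδneg i
      rw [map_neg, Finsupp.neg_apply, hδi, neg_neg] at hm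
      exact ⟨m, hm⟩
    · obtain ⟨n, hn⟩ := repr_natcast b hb hγneg i
      rw [map_neg, Finsupp.neg_apply, hγi] at hn
      exact ⟨n, hn⟩
  
end CascadeProofAux

namespace CascadeProofAux

variable {k V : Type*} [Field k] [CharZero k] [AddCommGroup V] [Module k V]
variable {P : RootSystemData k V} {Δ : Finset V}

lemma step_symm (hbase : P.IsBase Δ) (b : Basis Δ k V) (hb : ∀ i : Δ, b i = i)
    {S : Finset V} (hS : S ⊆ Δ) {a c : V}
    (h : a ∈ S ∧ c ∈ S ∧ P.pairInt a c ≠ 0) : c ∈ S ∧ a ∈ S ∧ P.pairInt c a ≠ 0 := by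
  obtain ⟨ha, hc, hp⟩ := h
  refine ⟨hc, ha, fun h0 => hp ?_⟩
  rcases eq_or_ne a c with rfl | hne
  · exact h0
  · refine pairInt_symm_zero (C := {c}) hbase b hb ?_ (hS ha) ?_
      (hbase.subset (hS hc)) ?_ h0
    · simpa using hS hc
    · simpa using hne
    · exact AddSubgroup.subset_closure (by simp)

lemma linked_symm (hbase : P.IsBase Δ) (b : Basis Δ k V) (hb : ∀ i : Δ, b i = i)
    {S : Finset V} (hS : S ⊆ Δ) {a c : V} (h : P.Linked S a c) : P.Linked S c a :=
  haveI : Std.Symm (fun a b => a ∈ S ∧ b ∈ S ∧ P.pairInt a b ≠ 0) :=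
    ⟨fun _ _ hx => step_symm hbase b hb hS hx⟩
  (Relation.ReflTransGen.stdSymm (r := fun a b => a ∈ S ∧ b ∈ S ∧ P.pairInt a b ≠ 0)).symm _ _ h

lemma component_eq (hbase : P.IsBase Δ) (b : Basis Δ k V) (hb : ∀ i : Δ, b i = i)
    {S : Finset V} (hS : S ⊆ Δ) {x y : V} (hxy : P.Linked S x y) :
    P.component S x = P.component S y := by
  ext z
  simp only [RootSystemData.component, Finset.mem_filter, and_congr_right_iff]
  intro _
  constructor
  · intro h; exact Relation.ReflTransGen.trans (linked_symm hbase b hb hS hxy) h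
  · intro h; exact Relation.ReflTransGen.trans hxy h

lemma components_subset {S C : Finset V} (hC : C ∈ P.components S) : C ⊆ S := by
  obtain ⟨x, _, rfl⟩ := Finset.mem_image.mp hC
  exact Finset.filter_subset _ _

lemma components_orth (hbase : P.IsBase Δ) (b : Basis Δ k V) (hb : ∀ i : Δ, b i = i)
    {S : Finset V} (hS : S ⊆ Δ) {C C' : Finset V} (hC : C ∈ P.components S)
    (hC' : C' ∈ P.components S) (hne : C ≠ C') :
    Disjoint C C' ∧ ∀ a ∈ C, ∀ c ∈ C', P.pairInt a c = 0 := by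
  obtain ⟨x, hx, rfl⟩ := Finset.mem_image.mp hC
  obtain ⟨y, hy, rfl⟩ := Finset.mem_image.mp hC'
  constructor
  · rw [Finset.disjoint_left]
    intro a ha ha'
    rw [RootSystemData.component, Finset.mem_filter] at ha ha'
    exact hne (component_eq hbase b hb hS
      (Relation.ReflTransGen.trans ha.2 (linked_symm hbase b hb hS ha'.2)))
  · intro a ha c hc
    rw [RootSystemData.component, Finset.mem_filter] at ha hc
    by_contra hp
    have step : P.Linked S a c := Relation.ReflTransGen.single ⟨ha.1, hc.1, hp⟩
    exact hne (component_eq hbase b hb hS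
      (Relation.ReflTransGen.trans ha.2
        (Relation.ReflTransGen.trans step (linked_symm hbase b hb hS hc.2))))

lemma cascadeAux_subset : ∀ (n : ℕ) (S : Finset V), ∀ K ∈ P.cascadeAux n S, K ⊆ S := by
  intro n
  induction n with
  | zero => intro S K hK; simp [RootSystemData.cascadeAux] at hK
  | succ n ih =>
    intro S K hK
    rw [RootSystemData.cascadeAux, Finset.mem_biUnion] at hK
    obtain ⟨C, hCm, hK⟩ := hK
    have hCS : C ⊆ S := components_subset hCm
    rcases Finset.mem_insert.mp hK with rfl | hK
    · exact hCS
    · exact ((ih _ _ hK).trans (Finset.filter_subset _ _)).trans hCS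

lemma rootsOf_mono {K C : Finset V} (h : K ⊆ C) : P.rootsOf K ⊆ P.rootsOf C := by
  intro α hα
  rw [RootSystemData.rootsOf, Finset.mem_filter] at hα ⊢
  exact ⟨hα.1, AddSubgroup.closure_mono (by exact_mod_cast h) hα.2⟩

lemma cascadeAux_tri (hbase : P.IsBase Δ) (b : Basis Δ k V) (hb : ∀ i : Δ, b i = i) :
    ∀ (n : ℕ) (S : Finset V), S ⊆ Δ →
    ∀ K ∈ P.cascadeAux n S, ∀ K' ∈ P.cascadeAux n S,
    K ⊆ K' ∨ K' ⊆ K ∨ (Disjoint K K' ∧ K ⊆ S ∧ K' ⊆ S ∧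
      ∀ α ∈ P.rootsOf K, ∀ β ∈ P.rootsOf K', α + β ∉ P.roots) := by
  intro n
  induction n with
  | zero => intro S hS K hK; simp [RootSystemData.cascadeAux] at hK
  | succ n ih =>
    intro S hS K hK K' hK'
    rw [RootSystemData.cascadeAux, Finset.mem_biUnion] at hK hK'
    obtain ⟨C, hCm, hK⟩ := hK
    obtain ⟨C', hC'm, hK'⟩ := hK'
    have hCS : C ⊆ S := components_subset hCm
    have hC'S : C' ⊆ S := components_subset hC'm
    rcases eq_or_ne C C' with rfl | hne
    · rcases Finset.mem_insert.mp hK with rfl | hK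
      · rcases Finset.mem_insert.mp hK' with rfl | hK'
        · left; exact subset_rfl
        · right; left
          exact (cascadeAux_subset _ _ _ hK').trans (Finset.filter_subset _ _)
      · rcases Finset.mem_insert.mp hK' with rfl | hK'
        · left; exact (cascadeAux_subset _ _ _ hK).trans (Finset.filter_subset _ _)
        · have hsub : P.zeroPart C ⊆ Δ := (Finset.filter_subset _ _).trans (hCS.trans hS)
          rcases ih (P.zeroPart C) hsub K hK K' hK' with h | h | ⟨h1, h2, h3, h4⟩
          · left; exact h
          · right; left; exact h
          · right; right
            exact ⟨h1, h2.trans ((Finset.filter_subset _ _).trans hCS),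
              h3.trans ((Finset.filter_subset _ _).trans hCS), h4⟩
    · right; right
      obtain ⟨hdisj, horth⟩ := components_orth hbase b hb hS hCm hC'm hne
      have hKC : K ⊆ C := by
        rcases Finset.mem_insert.mp hK with rfl | hK
        · exact subset_rfl
        · exact (cascadeAux_subset _ _ _ hK).trans (Finset.filter_subset _ _)
      have hK'C' : K' ⊆ C' := by
        rcases Finset.mem_insert.mp hK' with rfl | hK'
        · exact subset_rfl
        · exact (cascadeAux_subset _ _ _ hK').trans (Finset.filter_subset _ _)
      refine ⟨Disjoint.mono hKC hK'C' hdisj, hKC.trans hCS, hK'C'.trans hC'S, ?_⟩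
      intro α hα β hβ
      exact sum_not_root hbase b hb (hCS.trans hS) (hC'S.trans hS) hdisj horth
        (rootsOf_mono hKC hα) (rootsOf_mono hK'C' hβ)

end CascadeProofAux

variable {k V : Type*} [Field k] [CharZero k] [AddCommGroup V] [Module k V]

/-- Let `R` be a reduced root system with base `Π` and let `S ⊆ Δ`.  If
`K, K' ∈ 𝒦(S)`, then either `K ⊆ K'`, or `K' ⊆ K`, or `K` and `K'` are disjoint subsets of
`S` such that `α + β ∉ R` for every `α ∈ R^K` and every `β ∈ R^{K'}`. -/
theorem cascade_mem_trichotomy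
    (P : RootSystemData k V) (Δ : Finset V) (hbase : P.IsBase Δ)
    (S : Finset V) (hS : S ⊆ Δ)
    (K : Finset V) (hK : K ∈ P.cascade S) (K' : Finset V) (hK' : K' ∈ P.cascade S) :
    K ⊆ K' ∨ K' ⊆ K ∨
      (Disjoint K K' ∧ K ⊆ S ∧ K' ⊆ S ∧
        ∀ α ∈ P.rootsOf K, ∀ β ∈ P.rootsOf K', α + β ∉ P.roots) := by
  have hspan : ⊤ ≤ Submodule.span k (Set.range fun i : Δ => (i : V)) := by
    have hrange : (Set.range fun i : Δ => (i : V)) = (Δ : Set V) := by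
      ext x
      simp [Set.mem_range, Subtype.exists]
    rw [hrange, ← P.span_eq_top]
    refine Submodule.span_le.mpr ?_
    intro α hα
    have hα' : α ∈ P.roots := by exact_mod_cast hα
    have hcl : AddSubmonoid.closure (Δ : Set V) ≤
        (Submodule.span k (Δ : Set V)).toAddSubmonoid :=
      AddSubmonoid.closure_le.mpr Submodule.subset_span
    rcases hbase.pos_or_neg α hα' with h | h
    · exact hcl h
    · have : -α ∈ Submodule.span k (Δ : Set V) := hcl h
      simpa using Submodule.neg_mem _ this
  let b : Basis Δ k V := Basis.mk hbase.indep hspan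
  have hb : ∀ i : Δ, b i = i := fun i => Basis.mk_apply hbase.indep hspan i
  exact CascadeProofAux.cascadeAux_tri hbase b hb (S.card + 1) S hS K hK K' hK'
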